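/- Let k be a field, S = k[x,y], and R = k + xS. For any maximal ideal n of S not containing x, the localization of R at n ∩ R equals the localization S_n (as subrings of Frac S). -/

import Mathlib

open MvPolynomial

/-- Localization of a subset `A` of a field at (the complement of) a subset `P`,
as a set of fractions `a / b` with `a, b ∈ A`, `b ∉ P`. -/
def locSet {F : Type*} [DivisionRing F] (A P : Set F) : Set F :=
  {x | ∃ a ∈ A, ∃ b ∈ A, b ∉ P ∧ x = a / b}

/-- Let `k` be an algebraically closed field, `S = k[x,y]`, `R = k + xS`.
For any maximal ideal `n` of `S` with `x ∉ n`, the localization `R_{n ∩ R}` equals `S_n`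
inside `Frac S`. -/
theorem stmt_2 (k : Type*) [Field k] [IsAlgClosed k]
    (n : Ideal (MvPolynomial (Fin 2) k)) (hn : n.IsMaximal) (hx : X 0 ∉ n)
    (R : Subalgebra k (MvPolynomial (Fin 2) k))
    (hR : R = Algebra.adjoin k {f : MvPolynomial (Fin 2) k | ∃ m : ℕ, f = X 0 * X 1 ^ m})
    (φ : MvPolynomial (Fin 2) k → FractionRing (MvPolynomial (Fin 2) k))
    (hφ : φ = algebraMap (MvPolynomial (Fin 2) k) (FractionRing (MvPolynomial (Fin 2) k))) :
    locSet (φ '' (R : Set (MvPolynomial (Fin 2) k)))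
        (φ '' ((n : Set (MvPolynomial (Fin 2) k)) ∩ (R : Set (MvPolynomial (Fin 2) k))))
      = locSet (Set.range φ) (φ '' (n : Set (MvPolynomial (Fin 2) k))) := by
  have hinj : Function.Injective φ := by
    rw [hφ]; exact IsFractionRing.injective _ _
  have hXR : ∀ f : MvPolynomial (Fin 2) k, X 0 * f ∈ R := by
    intro f
    induction f using MvPolynomial.induction_on' with
    | monomial u c =>
      have h1 : (X (R := k) 0 : MvPolynomial (Fin 2) k) * X 1 ^ (u 1) ∈ R := by
        rw [hR]; exact Algebra.subset_adjoin ⟨u 1, rfl⟩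
      have h0 : (X (R := k) 0 : MvPolynomial (Fin 2) k) ∈ R := by
        rw [hR]
        exact Algebra.subset_adjoin ⟨0, by simp⟩
      have heq : (X 0 : MvPolynomial (Fin 2) k) * monomial u c =
          C c * X 0 ^ (u 0) * (X 0 * X 1 ^ (u 1)) := by
        rw [monomial_eq, Finsupp.prod_fintype _ _ (by simp), Fin.prod_univ_two]
        ring
      rw [heq]
      exact R.mul_mem (R.mul_mem (R.algebraMap_mem c) (R.pow_mem h0 _)) h1
    | add p q hp hq => rw [mul_add]; exact R.add_mem hp hq
  have hX0 : φ (X 0) ≠ 0 := by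
    rw [hφ]
    simpa using
      (IsFractionRing.to_map_eq_zero_iff
        (K := FractionRing (MvPolynomial (Fin 2) k))).not.mpr (X_ne_zero (R := k) 0)
  ext z
  constructor
  · rintro ⟨a, ⟨r₁, hr₁, rfl⟩, b, ⟨r₂, hr₂, rfl⟩, hb, rfl⟩
    refine ⟨φ r₁, ⟨r₁, rfl⟩, φ r₂, ⟨r₂, rfl⟩, ?_, rfl⟩
    rintro ⟨m, hm, hmb⟩
    exact hb ⟨m, ⟨hm, hinj hmb ▸ hr₂⟩, hmb⟩
  · rintro ⟨a, ⟨s, rfl⟩, b, ⟨t, rfl⟩, hb, rfl⟩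
    have ht : t ∉ n := fun h => hb ⟨t, h, rfl⟩
    refine ⟨φ (X 0 * s), ⟨X 0 * s, hXR s, rfl⟩, φ (X 0 * t), ⟨X 0 * t, hXR t, rfl⟩, ?_, ?_⟩
    · rintro ⟨m, ⟨hm, _⟩, hmb⟩
      have hme := hinj hmb
      rw [hme] at hm
      rcases hn.isPrime.mem_or_mem hm with h | h
      · exact hx h
      · exact ht h
    · rw [hφ] at hX0 ⊢
      rw [map_mul, map_mul, mul_div_mul_left _ _ hX0]
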